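/- Let R be a commutative ring and let f be a formal power series in R[[t]] with constant coefficient 1. Then there exists a unique sequence (α_i)_{i≥1} of elements of R such that f is the infinite product ∏_{i=1}^∞ (1 − α_i t^i); precisely, for every integer m ≥ 1, f is congruent to the finite product ∏_{i=1}^m (1 − α_i t^i) modulo t^{m+1}, and the sequence (α_i) is uniquely determined by this property. -/

import Mathlib

open PowerSeries Finset

section aux

variable {R : Type*} [CommRing R]

/-- key coefficient computation for multiplying by `1 - C a * X^n`. -/
lemma coeff_mul_one_sub (P : PowerSeries R) (a : R) (n j : ℕ) :
    (PowerSeries.coeff (R := R) j) (P * (1 - PowerSeries.C (R := R) a * PowerSeries.X ^ n)) =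
      (PowerSeries.coeff (R := R) j) P -
        (if n ≤ j then a * (PowerSeries.coeff (R := R) (j - n)) P else 0) := by
  have : P * (1 - PowerSeries.C (R := R) a * PowerSeries.X ^ n)
      = P - PowerSeries.C (R := R) a * (P * PowerSeries.X ^ n) := by ring
  rw [this, map_sub, PowerSeries.coeff_C_mul, PowerSeries.coeff_mul_X_pow']
  split <;> simp

lemma constantCoeff_prod (γ : ℕ → R) (m : ℕ) :
    PowerSeries.constantCoeff (R := R)
      (∏ i ∈ Finset.range m, (1 - PowerSeries.C (R := R) (γ i) * PowerSeries.X ^ (i + 1))) = 1 := by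
  rw [map_prod]
  apply Finset.prod_eq_one
  intro i _
  simp

/-- coefficients up to `m` of the partial products stabilize. -/
lemma coeff_prod_succ_le (γ : ℕ → R) (m j : ℕ) (hj : j ≤ m) :
    (PowerSeries.coeff (R := R) j)
      (∏ i ∈ Finset.range (m + 1), (1 - PowerSeries.C (R := R) (γ i) * PowerSeries.X ^ (i + 1))) =
    (PowerSeries.coeff (R := R) j)
      (∏ i ∈ Finset.range m, (1 - PowerSeries.C (R := R) (γ i) * PowerSeries.X ^ (i + 1))) := by
  rw [Finset.prod_range_succ, coeff_mul_one_sub, if_neg (by omega)]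
  ring

lemma coeff_prod_succ_top (γ : ℕ → R) (m : ℕ) :
    (PowerSeries.coeff (R := R) (m + 1))
      (∏ i ∈ Finset.range (m + 1), (1 - PowerSeries.C (R := R) (γ i) * PowerSeries.X ^ (i + 1))) =
    (PowerSeries.coeff (R := R) (m + 1))
      (∏ i ∈ Finset.range m, (1 - PowerSeries.C (R := R) (γ i) * PowerSeries.X ^ (i + 1))) - γ m := by
  rw [Finset.prod_range_succ, coeff_mul_one_sub, if_pos le_rfl]
  simp only [Nat.sub_self, PowerSeries.coeff_zero_eq_constantCoeff, constantCoeff_prod,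
    mul_one]

/-- the recursively defined approximations to the sequence `α`. -/
noncomputable def seqA (f : PowerSeries R) : ℕ → ℕ → R
  | 0 => fun _ => 0
  | (m + 1) => Function.update (seqA f m) m
      ((PowerSeries.coeff (R := R) (m + 1))
        (∏ i ∈ Finset.range m, (1 - PowerSeries.C (R := R) (seqA f m i) * PowerSeries.X ^ (i + 1)))
        - (PowerSeries.coeff (R := R) (m + 1)) f)

/-- the limiting sequence. -/
noncomputable def seqα (f : PowerSeries R) : ℕ → R := fun i => seqA f (i + 1) i

lemma seqA_agree (f : PowerSeries R) : ∀ m i, i < m → seqA f m i = seqα f i := by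
  intro m
  induction m with
  | zero => omega
  | succ m ih =>
    intro i hi
    rcases Nat.lt_succ_iff_lt_or_eq.mp hi with h | h
    · rw [show seqA f (m+1) i = seqA f m i from Function.update_of_ne (by omega) _ _, ih i h]
    · subst h; rfl

lemma seqα_spec (f : PowerSeries R) (m : ℕ) :
    seqα f m =
      (PowerSeries.coeff (R := R) (m + 1))
        (∏ i ∈ Finset.range m, (1 - PowerSeries.C (R := R) (seqα f i) * PowerSeries.X ^ (i + 1)))
        - (PowerSeries.coeff (R := R) (m + 1)) f := by
  have h : seqα f m = seqA f (m+1) m := rfl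
  rw [h, seqA, Function.update_self]
  have hp : (∏ i ∈ Finset.range m, (1 - PowerSeries.C (R := R) (seqA f m i) * PowerSeries.X ^ (i + 1)))
      = ∏ i ∈ Finset.range m, (1 - PowerSeries.C (R := R) (seqα f i) * PowerSeries.X ^ (i + 1)) :=
    Finset.prod_congr rfl fun i hi => by rw [seqA_agree f m i (Finset.mem_range.mp hi)]
  rw [hp]

end aux

/-- Every formal power series over a commutative ring `R` with constant
coefficient `1` can be written uniquely as the infinite product `∏_{i=1}^∞ (1 − α_i t^i)`:
precisely, there is a unique sequence `(α_i)_{i ≥ 1}` of elements of `R` (here indexed so that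
`α i` is the coefficient attached to `t^(i+1)`) such that for every `m ≥ 1`, `f` agrees with
the finite product `∏_{i=1}^m (1 − α_i t^i)` in all coefficients of degree `≤ m`, i.e. modulo
`t^(m+1)`. -/
theorem unique_infinite_product_decomposition (R : Type*) [CommRing R] (f : PowerSeries R)
    (hf : PowerSeries.constantCoeff (R := R) f = 1) :
    ∃! α : ℕ → R, ∀ m : ℕ, 1 ≤ m → ∀ j : ℕ, j ≤ m →
      (PowerSeries.coeff (R := R) j) f =
        (PowerSeries.coeff (R := R) j)
          (∏ i ∈ Finset.range m, (1 - PowerSeries.C (R := R) (α i) * PowerSeries.X ^ (i + 1))) := by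
  set α := seqα f with hα
  have key : ∀ m : ℕ, ∀ j : ℕ, j ≤ m →
      (PowerSeries.coeff (R := R) j) f =
        (PowerSeries.coeff (R := R) j)
          (∏ i ∈ Finset.range m, (1 - PowerSeries.C (R := R) (α i) * PowerSeries.X ^ (i + 1))) := by
    intro m
    induction m with
    | zero =>
      intro j hj
      interval_cases j
      simp [PowerSeries.coeff_zero_eq_constantCoeff, hf]
    | succ m ih =>
      intro j hj
      rcases Nat.lt_succ_iff_lt_or_eq.mp (Nat.lt_succ_of_le hj) with h | h
      · rw [coeff_prod_succ_le _ _ _ (by omega), ← ih j (by omega)]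
      · subst h
        rw [coeff_prod_succ_top, hα, seqα_spec f m]
        ring
  refine ⟨α, fun m _ j hj => key m j hj, ?_⟩
  intro β hβ
  funext i
  induction i using Nat.strong_induction_on with
  | _ i ih =>
    have hprod : (∏ k ∈ Finset.range i, (1 - PowerSeries.C (R := R) (β k) * PowerSeries.X ^ (k + 1)))
        = ∏ k ∈ Finset.range i, (1 - PowerSeries.C (R := R) (α k) * PowerSeries.X ^ (k + 1)) :=
      Finset.prod_congr rfl fun k hk => by rw [ih k (Finset.mem_range.mp hk)]
    have h1 := hβ (i + 1) (by omega) (i + 1) le_rfl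
    have h2 := key (i + 1) (i + 1) le_rfl
    rw [coeff_prod_succ_top] at h1 h2
    rw [hprod] at h1
    have := h1.symm.trans h2
    linear_combination -this
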